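/- Let A be a unital C*-algebra and let T : A → A be a continuous linear map which is a triple derivation at the unit 1 and satisfies T(1) = 0. Then T is a *-derivation and a triple derivation. -/

import Mathlib

/-- The C*-triple product `{a,b,c} = (1/2)(a b* c + c b* a)`. -/
noncomputable def trip {R : Type*} [NonUnitalRing R] [Module ℂ R] [Star R] (a b c : R) : R :=
  (2 : ℂ)⁻¹ • (a * star b * c + c * star b * a)

section Helpers

variable {A : Type*} [CStarAlgebra A]

lemma smul_cancel {c : ℂ} (hc : c ≠ 0) {y : A} (h : c • y = 0) : y = 0 := by
  have := congrArg (fun z => c⁻¹ • z) h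
  simpa [smul_smul, inv_mul_cancel₀ hc] using this

lemma two_smul_cancel {y z : A} (h : (2:ℂ) • y = (2:ℂ) • z) : y = z := by
  have : (2:ℂ) • (y - z) = 0 := by rw [smul_sub, h, sub_self]
  have h2 := smul_cancel (two_ne_zero) this
  exact sub_eq_zero.mp h2

lemma semiprime (u : A) (h : ∀ z : A, u * z * u = 0) : u = 0 := by
  have h1 : u * star u * u = 0 := h (star u)
  have hp : (star u * u) * (star u * u) = 0 := by
    calc (star u * u) * (star u * u) = star u * (u * star u * u) := by noncomm_ring
    _ = 0 := by rw [h1, mul_zero]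
  have hsa : star (star u * u) = star u * u := by simp [star_mul]
  have hn : ‖star u * u‖ * ‖star u * u‖ = 0 := by
    rw [← CStarRing.norm_star_mul_self (x := star u * u), hsa, hp, norm_zero]
  have : ‖star u * u‖ = 0 := by nlinarith [norm_nonneg (star u * u)]
  have h2 : star u * u = 0 := norm_eq_zero.mp this
  have : ‖u‖ * ‖u‖ = 0 := by rw [← CStarRing.norm_star_mul_self, h2, norm_zero]
  have : ‖u‖ = 0 := by nlinarith [norm_nonneg u]
  exact norm_eq_zero.mp this

end Helpers

section Lem1
variable {A : Type*} [CStarAlgebra A]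

-- auxiliary: from the anticommuting hypothesis, derive (b x b) y (b z a) = 0
lemma lem1_aux (a b : A) (h : ∀ r : A, a * r * b + b * r * a = 0) :
    ∀ x y z : A, (b * x * b) * y * (b * z * a) = 0 := by
  have h' : ∀ r : A, a * r * b = -(b * r * a) := fun r => eq_neg_of_add_eq_zero_left (h r)
  intro x y z
  -- step1 : (a x b) y b = -((b x b) y a)
  have step1 : ∀ y' : A, (a * x * b) * y' * b = -((b * x * b) * y' * a) := by
    intro y'
    have := h' (x * b * y')
    calc (a * x * b) * y' * b = a * (x * b * y') * b := by noncomm_ring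
    _ = -(b * (x * b * y') * a) := this
    _ = -((b * x * b) * y' * a) := by noncomm_ring
  -- two computations of the word  (a x b) y b z b
  have e1 : (a * x * b) * (y * b * z) * b = -((b * x * b) * (y * b * z) * a) := step1 (y * b * z)
  have e2 : (a * x * b) * (y * b * z) * b = (b * x * b) * y * (b * z * a) := by
    have : (a * x * b) * (y * b * z) * b = ((a * x * b) * y * b) * (z * b) := by noncomm_ring
    rw [this, step1 y]
    have h2 := h' z
    calc -((b * x * b) * y * a) * (z * b) = -((b * x * b) * y * (a * z * b)) := by noncomm_ring
    _ = -((b * x * b) * y * (-(b * z * a))) := by rw [h2]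
    _ = (b * x * b) * y * (b * z * a) := by noncomm_ring
  have e3 : -((b * x * b) * (y * b * z) * a) = -((b * x * b) * y * (b * z * a)) := by
    congr 1; noncomm_ring
  have : (b * x * b) * y * (b * z * a) + (b * x * b) * y * (b * z * a) = 0 := by
    have heq := e2.symm.trans (e1.trans e3)
    -- heq : (b x b) y (b z a) = -((b x b) y (b z a))
    nth_rewrite 1 [heq]
    exact neg_add_cancel _
  have h4 : (2:ℂ) • ((b * x * b) * y * (b * z * a)) = 0 := by
    rw [two_smul]; exact this
  exact smul_cancel two_ne_zero h4

lemma lem1 (a b : A) (h : ∀ r : A, a * r * b + b * r * a = 0) : ∀ r : A, a * r * b = 0 := by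
  have h' : ∀ r : A, a * r * b = -(b * r * a) := fun r => eq_neg_of_add_eq_zero_left (h r)
  have hJb := lem1_aux a b h
  -- step3 : (b z a) y (a z b) = 0
  have step3 : ∀ y z : A, (b * z * a) * y * (a * z * b) = 0 := by
    intro y z
    have key : ∀ s : A, ((b * z * a) * y * (a * z * b)) * s * ((b * z * a) * y * (a * z * b)) = 0 := by
      intro s
      have h0 := hJb (z * a * y * a * z) s z
      calc ((b * z * a) * y * (a * z * b)) * s * ((b * z * a) * y * (a * z * b))
          = ((b * (z * a * y * a * z) * b) * s * (b * z * a)) * (y * (a * z * b)) := by noncomm_ring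
      _ = 0 * (y * (a * z * b)) := by rw [h0]
      _ = 0 := zero_mul _
    exact semiprime _ key
  intro r
  have key : ∀ y : A, (a * r * b) * y * (a * r * b) = 0 := by
    intro y
    nth_rewrite 1 [h' r]
    calc -(b * r * a) * y * (a * r * b) = -((b * r * a) * y * (a * r * b)) := by noncomm_ring
    _ = 0 := by rw [step3 y r, neg_zero]
  exact semiprime _ key

lemma flip_zero (a b : A) (h : ∀ z : A, a * z * b = 0) : ∀ z : A, b * z * a = 0 := by
  intro z
  apply semiprime
  intro s
  calc (b * z * a) * s * (b * z * a) = b * z * (a * s * b) * z * a := by noncomm_ring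
  _ = 0 := by rw [h s]; noncomm_ring

end Lem1

section Bresar
variable {A : Type*} [CStarAlgebra A] (d : A →ₗ[ℂ] A)
variable (hJ : ∀ x : A, d (x * x) = d x * x + x * d x)

section
include hJ

lemma pol : ∀ x y : A, d (x * y + y * x) = d x * y + x * d y + d y * x + y * d x := by
  intro x y
  have e : x * y + y * x = (x + y) * (x + y) - x * x - y * y := by noncomm_ring
  rw [e, map_sub, map_sub, hJ, hJ, hJ, map_add]
  noncomm_ring

lemma bL2 : ∀ x y : A, d (x * y * x) = d x * (y * x) + x * d y * x + (x * y) * d x := by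
  intro x y
  apply two_smul_cancel (A := A)
  have e : (2:ℂ) • (x * y * x) =
      (x * (x * y + y * x) + (x * y + y * x) * x) - ((x * x) * y + y * (x * x)) := by
    rw [two_smul]; noncomm_ring
  calc (2:ℂ) • d (x * y * x) = d ((2:ℂ) • (x * y * x)) := (map_smul d _ _).symm
  _ = (2:ℂ) • (d x * (y * x) + x * d y * x + (x * y) * d x) := by
      rw [e, map_sub, pol d hJ x (x * y + y * x), pol d hJ (x * x) y, pol d hJ x y, hJ, two_smul]
      noncomm_ring

lemma bL3 : ∀ x y z : A, d (x * y * z + z * y * x) =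
    d x * (y * z) + x * d y * z + (x * y) * d z
      + d z * (y * x) + z * d y * x + (z * y) * d x := by
  intro x y z
  have e : x * y * z + z * y * x = (x + z) * y * (x + z) - x * y * x - z * y * z := by
    noncomm_ring
  rw [e, map_sub, map_sub, bL2 d hJ, bL2 d hJ, bL2 d hJ, map_add]
  noncomm_ring

lemma hdyx : ∀ x y : A, d (y * x) = d x * y + x * d y + d y * x + y * d x - d (x * y) := by
  intro x y
  have h := pol d hJ x y
  rw [map_add] at h
  exact eq_sub_of_add_eq' h

lemma key5 : ∀ x y z : A,
    (d (x * y) - d x * y - x * d y) * z * (x * y - y * x)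
      + (x * y - y * x) * z * (d (x * y) - d x * y - x * d y) = 0 := by
  intro x y z
  have E1 := bL3 d hJ (x * y) z (y * x)
  rw [hdyx d hJ x y] at E1
  have harg : (x * y) * z * (y * x) + (y * x) * z * (x * y)
      = x * (y * z * y) * x + y * (x * z * x) * y := by noncomm_ring
  have E2 : d ((x * y) * z * (y * x) + (y * x) * z * (x * y))
      = d x * ((y * z * y) * x) + x * (d y * (z * y) + y * d z * y + (y * z) * d y) * x
        + (x * (y * z * y)) * d x
        + d y * ((x * z * x) * y) + y * (d x * (z * x) + x * d z * x + (x * z) * d x) * y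
        + (y * (x * z * x)) * d y := by
    rw [harg, map_add, bL2 d hJ x (y * z * y), bL2 d hJ y (x * z * x), bL2 d hJ y z,
      bL2 d hJ x z]
    abel
  calc (d (x * y) - d x * y - x * d y) * z * (x * y - y * x)
      + (x * y - y * x) * z * (d (x * y) - d x * y - x * d y)
      = (d x * ((y * z * y) * x) + x * (d y * (z * y) + y * d z * y + (y * z) * d y) * x
        + (x * (y * z * y)) * d x
        + d y * ((x * z * x) * y) + y * (d x * (z * x) + x * d z * x + (x * z) * d x) * y
        + (y * (x * z * x)) * d y)
      - (d (x * y) * (z * (y * x)) + (x * y) * d z * (y * x)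
        + ((x * y) * z) * (d x * y + x * d y + d y * x + y * d x - d (x * y))
        + (d x * y + x * d y + d y * x + y * d x - d (x * y)) * (z * (x * y))
        + (y * x) * d z * (x * y) + ((y * x) * z) * d (x * y)) := by noncomm_ring
  _ = d ((x * y) * z * (y * x) + (y * x) * z * (x * y))
      - d ((x * y) * z * (y * x) + (y * x) * z * (x * y)) := by rw [← E2, ← E1]
  _ = 0 := sub_self _

end
end Bresar

section Bresar2
variable {A : Type*} [CStarAlgebra A]

private noncomputable def Gd (d : A →ₗ[ℂ] A) (x y : A) : A := d (x * y) - d x * y - x * d y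

private noncomputable def Bk (x y : A) : A := x * y - y * x

variable (d : A →ₗ[ℂ] A) (hJ : ∀ x : A, d (x * x) = d x * x + x * d x)

section
include hJ

lemma L7 : ∀ x y z : A, Gd d x y * z * Bk x y = 0 := fun x y =>
  lem1 _ _ (fun z => key5 d hJ x y z)

lemma L7' : ∀ x y z : A, Bk x y * z * Gd d x y = 0 := fun x y =>
  flip_zero _ _ (L7 d hJ x y)

lemma L9 : ∀ x u y z : A, Gd d x y * z * Bk u y = 0 := by
  intro x u y z
  have Gadd : Gd d (x + u) y = Gd d x y + Gd d u y := by
    simp only [Gd, map_add, add_mul]; abel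
  have Badd : Bk (x + u) y = Bk x y + Bk u y := by
    simp only [Bk, add_mul, mul_add]; abel
  have L8 : ∀ s : A, Gd d x y * s * Bk u y + Gd d u y * s * Bk x y = 0 := by
    intro s
    have h0 := L7 d hJ (x + u) y s
    rw [Gadd, Badd] at h0
    have h1 := L7 d hJ x y s
    have h2 := L7 d hJ u y s
    calc Gd d x y * s * Bk u y + Gd d u y * s * Bk x y
        = (Gd d x y + Gd d u y) * s * (Bk x y + Bk u y)
          - Gd d x y * s * Bk x y - Gd d u y * s * Bk u y := by noncomm_ring
    _ = 0 := by rw [h0, h1, h2]; simp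
  apply semiprime
  intro s
  have e1 : Gd d x y * z * Bk u y = -(Gd d u y * z * Bk x y) :=
    eq_neg_of_add_eq_zero_left (L8 z)
  have h3 := congrArg (fun w => Gd d x y * z * Bk u y * s * w) e1
  rw [h3]
  have h4 := L7' d hJ u y s
  calc Gd d x y * z * Bk u y * s * -(Gd d u y * z * Bk x y)
      = -(Gd d x y * z * ((Bk u y * s * Gd d u y) * (z * Bk x y))) := by noncomm_ring
  _ = 0 := by rw [h4]; simp

lemma L9' : ∀ x u y z : A, Bk u y * z * Gd d x y = 0 := fun x u y =>
  flip_zero _ _ (L9 d hJ x u y)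

lemma L10 : ∀ x y u v z : A, Gd d x y * z * Bk u v = 0 := by
  intro x y u v z
  have Gadd : Gd d x (y + v) = Gd d x y + Gd d x v := by
    simp only [Gd, map_add, mul_add]; abel
  have Badd : Bk u (y + v) = Bk u y + Bk u v := by
    simp only [Bk, add_mul, mul_add]; abel
  have L10a : ∀ s : A, Gd d x y * s * Bk u v + Gd d x v * s * Bk u y = 0 := by
    intro s
    have h0 := L9 d hJ x u (y + v) s
    rw [Gadd, Badd] at h0
    have h1 := L9 d hJ x u y s
    have h2 := L9 d hJ x u v s
    calc Gd d x y * s * Bk u v + Gd d x v * s * Bk u y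
        = (Gd d x y + Gd d x v) * s * (Bk u y + Bk u v)
          - Gd d x y * s * Bk u y - Gd d x v * s * Bk u v := by noncomm_ring
    _ = 0 := by rw [h0, h1, h2]; simp
  apply semiprime
  intro s
  have e1 : Gd d x y * z * Bk u v = -(Gd d x v * z * Bk u y) :=
    eq_neg_of_add_eq_zero_left (L10a z)
  have h3 := congrArg (fun w => Gd d x y * z * Bk u v * s * w) e1
  rw [h3]
  have h4 := L9' d hJ x u v s
  calc Gd d x y * z * Bk u v * s * -(Gd d x v * z * Bk u y)
      = -(Gd d x y * z * ((Bk u v * s * Gd d x v) * (z * Bk u y))) := by noncomm_ring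
  _ = 0 := by rw [h4]; simp

lemma L10' : ∀ x y u v z : A, Bk u v * z * Gd d x y = 0 := fun x y u v =>
  flip_zero _ _ (L10 d hJ x y u v)

theorem bresar : ∀ x y : A, d (x * y) = d x * y + x * d y := by
  intro x y
  obtain ⟨c, hc⟩ : ∃ c : A, c = d (x * y) - d x * y - x * d y := ⟨_, rfl⟩
  have hGc : Gd d x y = c := hc.symm
  have hBk : Bk x y = x * y - y * x := rfl
  have comm1 : ∀ u v : A, c * (u * v) = c * (v * u) := by
    intro u v
    have h0 := L10 d hJ x y u v 1
    rw [mul_one, hGc] at h0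
    have h1 : c * (u * v) - c * (v * u) = 0 := by rw [← mul_sub]; exact h0
    exact sub_eq_zero.mp h1
  have comm2 : ∀ u v : A, (u * v) * c = (v * u) * c := by
    intro u v
    have h0 := L10' d hJ x y u v 1
    rw [mul_one, hGc] at h0
    have h1 : (u * v) * c - (v * u) * c = 0 := by rw [← sub_mul]; exact h0
    exact sub_eq_zero.mp h1
  have cB : c * Bk x y = 0 := by
    have h0 := L10 d hJ x y x y 1
    rwa [mul_one, hGc] at h0
  have Bc : Bk x y * c = 0 := by
    have h0 := L10' d hJ x y x y 1
    rwa [mul_one, hGc] at h0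
  have hexp1 : c * c = c * d (x * y) - c * (d x * y) - c * (x * d y) := by
    nth_rewrite 2 [hc]; noncomm_ring
  have hexp2 : c * c = d (x * y) * c - (d x * y) * c - (x * d y) * c := by
    nth_rewrite 1 [hc]; noncomm_ring
  have expand : d (Bk x y) = d (x * y) - (d x * y + x * d y + d y * x + y * d x - d (x * y)) := by
    rw [hBk, map_sub, hdyx d hJ x y]
  have hcdB : c * d (Bk x y) = (2:ℂ) • (c * c) := by
    have e1 : c * (d y * x) = c * (x * d y) := comm1 _ _
    have e2 : c * (y * d x) = c * (d x * y) := comm1 _ _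
    calc c * d (Bk x y)
        = c * d (x*y) + c * d (x*y) - c * (d x * y) - c * (x * d y)
          - c * (d y * x) - c * (y * d x) := by rw [expand]; noncomm_ring
    _ = c * d (x*y) + c * d (x*y) - c * (d x * y) - c * (x * d y)
          - c * (x * d y) - c * (d x * y) := by rw [e1, e2]
    _ = (2:ℂ) • (c * c) := by rw [two_smul, hexp1]; abel
  have hdBc : d (Bk x y) * c = (2:ℂ) • (c * c) := by
    have e1 : (d y * x) * c = (x * d y) * c := comm2 _ _
    have e2 : (y * d x) * c = (d x * y) * c := comm2 _ _
    calc d (Bk x y) * c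
        = d (x*y) * c + d (x*y) * c - (d x * y) * c - (x * d y) * c
          - (d y * x) * c - (y * d x) * c := by rw [expand]; noncomm_ring
    _ = d (x*y) * c + d (x*y) * c - (d x * y) * c - (x * d y) * c
          - (x * d y) * c - (d x * y) * c := by rw [e1, e2]
    _ = (2:ℂ) • (c * c) := by rw [two_smul, hexp2]; abel
  have hpol := pol d hJ (Bk x y) c
  rw [Bc, cB, add_zero, map_zero, hcdB, hdBc] at hpol
  -- hpol : 0 = 2•(c*c) + Bk*dc + dc*Bk + 2•(c*c)
  have hmid1 : c * (Bk x y * d c) * c = 0 := by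
    calc c * (Bk x y * d c) * c = (c * Bk x y) * (d c * c) := by simp only [mul_assoc]
    _ = 0 := by rw [cB, zero_mul]
  have hmid2 : c * (d c * Bk x y) * c = 0 := by
    calc c * (d c * Bk x y) * c = (c * d c) * (Bk x y * c) := by simp only [mul_assoc]
    _ = 0 := by rw [Bc, mul_zero]
  have hXc : c * ((2:ℂ) • (c * c)) * c = (2:ℂ) • (c * (c * c) * c) := by
    rw [mul_smul_comm, smul_mul_assoc]
  have h0 := congrArg (fun w => c * w * c) hpol
  simp only [mul_zero, zero_mul, mul_add, add_mul] at h0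
  rw [hmid1, hmid2, hXc] at h0
  simp only [add_zero, zero_add] at h0
  have h2 : (2:ℂ) • ((2:ℂ) • (c * (c * c) * c)) = 0 := by
    rw [two_smul]; exact h0.symm
  have hc4 : c * (c * c) * c = 0 := smul_cancel two_ne_zero (smul_cancel two_ne_zero h2)
  have czc : ∀ z : A, c * z * c = c * c * z := by
    intro z
    have h3 := comm1 z c
    calc c * z * c = c * (z * c) := by rw [mul_assoc]
    _ = c * (c * z) := h3
    _ = c * c * z := by rw [mul_assoc]
  have hq : ∀ z : A, (c * c) * z * (c * c) = 0 := by
    intro z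
    calc (c * c) * z * (c * c) = c * (c * z * c) * c := by simp only [mul_assoc]
    _ = c * (c * c * z) * c := by rw [czc z]
    _ = (c * c) * (c * z * c) := by simp only [mul_assoc]
    _ = (c * c) * (c * c * z) := by rw [czc z]
    _ = (c * (c * c) * c) * z := by simp only [mul_assoc]
    _ = 0 := by rw [hc4, zero_mul]
  have hcc : c * c = 0 := semiprime _ hq
  have hczc : ∀ z : A, c * z * c = 0 := by
    intro z; rw [czc, hcc, zero_mul]
  have hc0 : c = 0 := semiprime _ hczc
  have hfin : d (x * y) - d x * y - x * d y = 0 := by rw [← hc]; exact hc0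
  have h9 : d (x * y) - (d x * y + x * d y) = 0 := by
    calc d (x * y) - (d x * y + x * d y) = d (x * y) - d x * y - x * d y := by abel
    _ = 0 := hfin
  exact sub_eq_zero.mp h9

end
end Bresar2

section Analytic
open Filter Topology
variable {A : Type*} [CStarAlgebra A]

lemma limzero (φ : ℝ → A) (hc : ContinuousAt φ 0)
    (h : ∀ᶠ t in 𝓝[>] (0:ℝ), φ t = 0) : φ 0 = 0 := by
  have h1 : Filter.Tendsto φ (𝓝[>] (0:ℝ)) (𝓝 (φ 0)) := hc.continuousWithinAt.tendsto
  have h2 : Filter.Tendsto φ (𝓝[>] (0:ℝ)) (𝓝 0) :=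
    Filter.Tendsto.congr' (h.mono fun t ht => ht.symm) tendsto_const_nhds
  exact tendsto_nhds_unique h1 h2

lemma alg1 (x vt Tx TQ : A) (c : ℂ) (hvein : vt = 1 - c • (x * vt))
    (F1 : (c • Tx) * vt + vt * (c • Tx)
      + ((1 + c • x) * (-(c • Tx) + (c ^ 2) • TQ)
        + (-(c • Tx) + (c ^ 2) • TQ) * (1 + c • x)) = 0) :
    (c ^ 2) • ((2:ℂ) • TQ - Tx * (x * vt) - (x * vt) * Tx - x * Tx - Tx * x
      + c • (x * TQ + TQ * x)) = 0 := by
  have key : (c ^ 2) • ((2:ℂ) • TQ - Tx * (x * vt) - (x * vt) * Tx - x * Tx - Tx * x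
      + c • (x * TQ + TQ * x)) =
      (c • Tx) * vt + vt * (c • Tx)
      + ((1 + c • x) * (-(c • Tx) + (c ^ 2) • TQ)
        + (-(c • Tx) + (c ^ 2) • TQ) * (1 + c • x)) := by
    nth_rewrite 3 4 [hvein]
    simp only [mul_add, add_mul, mul_sub, sub_mul, mul_neg, neg_mul, smul_add, smul_sub,
      smul_smul, smul_mul_assoc, mul_smul_comm, mul_one, one_mul, neg_smul, smul_neg,
      mul_assoc]
    module
  rw [key]; exact F1

lemma alg2 (x E R : A) (c : ℂ)
    (FD : (1 + c • x) * (c • E + (c ^ 2) • R) + (c • E + (c ^ 2) • R) * (1 + c • x) = 0) :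
    c • ((2:ℂ) • E + c • ((2:ℂ) • R + x * E + E * x) + (c ^ 2) • (x * R + R * x)) = 0 := by
  have key : c • ((2:ℂ) • E + c • ((2:ℂ) • R + x * E + E * x) + (c ^ 2) • (x * R + R * x)) =
      (1 + c • x) * (c • E + (c ^ 2) • R) + (c • E + (c ^ 2) • R) * (1 + c • x) := by
    simp only [mul_add, add_mul, smul_add, smul_smul, smul_mul_assoc, mul_smul_comm,
      mul_one, one_mul, mul_assoc]
    module
  rw [key]; exact FD

end Analytic

section Main
open Filter Topology
variable {A : Type*} [CStarAlgebra A]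

theorem star_and_jordan (T : A →ₗ[ℂ] A) (hcont : Continuous T)
    (hT : ∀ a b c : A, trip a b c = 1 →
      T 1 = trip (T a) b c + trip a (T b) c + trip a b (T c))
    (h1 : T 1 = 0) (x : A) :
    T x = star (T (star x)) ∧ T (x * x) = T x * x + x * T x := by
  set v : ℝ → A := fun s => Ring.inverse (1 + ((s : ℝ) : ℂ) • x) with hvdef
  have hvc : ContinuousAt v 0 := by
    have hin : ContinuousAt (fun s : ℝ => 1 + ((s : ℝ) : ℂ) • x) 0 := by fun_prop
    have hR : ContinuousAt (Ring.inverse : A → A) ((1 : Aˣ) : A) :=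
      NormedRing.inverse_continuousAt (1 : Aˣ)
    have hR' : ContinuousAt (Ring.inverse : A → A) ((fun s : ℝ => 1 + ((s : ℝ) : ℂ) • x) 0) := by
      simpa using hR
    exact ContinuousAt.comp (f := fun s : ℝ => 1 + ((s : ℝ) : ℂ) • x)
      (g := (Ring.inverse : A → A)) hR' hin
  have hv0 : v 0 = 1 := by simp [hvdef]
  -- the two functions whose vanishing at 0 we will establish
  set q : ℝ → A := fun s => x * (x * v s) with hqdef
  set g : ℝ → A := fun s => (2:ℂ) • T (q s) - T x * (x * v s) - (x * v s) * T x
      - x * T x - T x * x + ((s : ℝ) : ℂ) • (x * T (q s) + T (q s) * x) with hgdef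
  set E : A := T x - star (T (star x)) with hEdef
  set R : ℝ → A := fun s => star (T (star (q s))) - T (q s) with hRdef
  set h : ℝ → A := fun s => (2:ℂ) • E + ((s : ℝ) : ℂ) • ((2:ℂ) • R s + x * E + E * x)
      + (((s : ℝ) : ℂ) ^ 2) • (x * R s + R s * x) with hhdef
  have hqc : ContinuousAt q 0 := by
    apply ContinuousAt.mul continuousAt_const
    exact ContinuousAt.mul continuousAt_const hvc
  have hgc : ContinuousAt g 0 := by
    rw [hgdef]
    fun_prop
  have hhc : ContinuousAt h 0 := by
    rw [hhdef]
    fun_prop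
  have hev : ∀ᶠ t in 𝓝[>] (0:ℝ), g t = 0 ∧ h t = 0 := by
    have hmem : Set.Ioo (0:ℝ) ((‖x‖ + 1)⁻¹) ∈ 𝓝[>] (0:ℝ) :=
      Ioo_mem_nhdsGT_of_mem ⟨le_refl 0, by positivity⟩
    filter_upwards [hmem] with t ht
    obtain ⟨ht0, htlt⟩ := ht
    have hc0 : ((t : ℝ) : ℂ) ≠ 0 := Complex.ofReal_ne_zero.mpr ht0.ne'
    have hnorm : ‖((t : ℝ) : ℂ) • x‖ < 1 := by
      rw [norm_smul, Complex.norm_real, Real.norm_eq_abs, abs_of_pos ht0]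
      have hpos : (0:ℝ) < ‖x‖ + 1 := by positivity
      have h2 : t * (‖x‖ + 1) < (‖x‖ + 1)⁻¹ * (‖x‖ + 1) := by
        exact mul_lt_mul_of_pos_right htlt hpos
      rw [inv_mul_cancel₀ hpos.ne'] at h2
      nlinarith [h2, ht0]
    have hu : IsUnit (1 + ((t : ℝ) : ℂ) • x) := by
      refine ⟨Units.oneSub (-(((t : ℝ) : ℂ) • x)) (by rwa [norm_neg]), ?_⟩
      rw [Units.val_oneSub, sub_neg_eq_add]
    have hva : (1 + ((t : ℝ) : ℂ) • x) * v t = 1 := Ring.mul_inverse_cancel _ hu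
    have hav : v t * (1 + ((t : ℝ) : ℂ) • x) = 1 := Ring.inverse_mul_cancel _ hu
    have hvein : v t = 1 - ((t : ℝ) : ℂ) • (x * v t) := by
      have hexp : (1 + ((t : ℝ) : ℂ) • x) * v t = v t + ((t : ℝ) : ℂ) • (x * v t) := by
        rw [add_mul, one_mul, smul_mul_assoc]
      rw [hexp] at hva
      exact (eq_sub_of_add_eq hva)
    have hxv : x * v t = x - ((t : ℝ) : ℂ) • q t := by
      nth_rewrite 1 [hvein]
      rw [mul_sub, mul_one, mul_smul_comm]
    have hv2 : v t = 1 - ((t : ℝ) : ℂ) • x + (((t : ℝ) : ℂ) ^ 2) • q t := by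
      calc v t = 1 - ((t : ℝ) : ℂ) • (x * v t) := hvein
      _ = 1 - ((t : ℝ) : ℂ) • (x - ((t : ℝ) : ℂ) • q t) := by rw [hxv]
      _ = 1 - ((t : ℝ) : ℂ) • x + (((t : ℝ) : ℂ) ^ 2) • q t := by
          rw [smul_sub, smul_smul, ← pow_two]; abel
    have hTa : T (1 + ((t : ℝ) : ℂ) • x) = ((t : ℝ) : ℂ) • T x := by
      rw [map_add, map_smul, h1, zero_add]
    have hTv : T (v t) = -(((t : ℝ) : ℂ) • T x) + (((t : ℝ) : ℂ) ^ 2) • T (q t) := by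
      rw [hv2, map_add, map_sub, map_smul, map_smul, h1]
      abel
    have h2A : (2:ℂ)⁻¹ • ((1:A) + 1) = 1 := by
      rw [← two_smul ℂ (1:A), smul_smul, inv_mul_cancel₀ (two_ne_zero), one_smul]
    have htrip1 : trip (1 + ((t : ℝ) : ℂ) • x) 1 (v t) = 1 := by
      rw [trip]
      simp only [star_one, mul_one, one_mul]
      rw [hva, hav]
      exact h2A
    have htrip2 : trip (1 + ((t : ℝ) : ℂ) • x) (star (v t)) 1 = 1 := by
      rw [trip]
      simp only [star_star, mul_one, one_mul]
      rw [hva, hav]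
      exact h2A
    have e1 := hT (1 + ((t : ℝ) : ℂ) • x) 1 (v t) htrip1
    rw [h1] at e1
    simp only [trip, star_one, star_zero, mul_one, one_mul, mul_zero, zero_mul, add_zero,
      zero_add, smul_zero] at e1
    have F1 : T (1 + ((t : ℝ) : ℂ) • x) * v t + v t * T (1 + ((t : ℝ) : ℂ) • x)
        + ((1 + ((t : ℝ) : ℂ) • x) * T (v t) + T (v t) * (1 + ((t : ℝ) : ℂ) • x)) = 0 := by
      have e1' : (2:ℂ)⁻¹ • (T (1 + ((t : ℝ) : ℂ) • x) * v t + v t * T (1 + ((t : ℝ) : ℂ) • x)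
          + ((1 + ((t : ℝ) : ℂ) • x) * T (v t) + T (v t) * (1 + ((t : ℝ) : ℂ) • x))) = 0 := by
        rw [smul_add]
        exact e1.symm
      exact smul_cancel (inv_ne_zero two_ne_zero) e1'
    have e2 := hT (1 + ((t : ℝ) : ℂ) • x) (star (v t)) 1 htrip2
    rw [h1] at e2
    simp only [trip, star_star, star_zero, mul_one, one_mul, mul_zero, zero_mul, add_zero,
      zero_add, smul_zero] at e2
    have F2 : T (1 + ((t : ℝ) : ℂ) • x) * v t + v t * T (1 + ((t : ℝ) : ℂ) • x)
        + ((1 + ((t : ℝ) : ℂ) • x) * star (T (star (v t)))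
          + star (T (star (v t))) * (1 + ((t : ℝ) : ℂ) • x)) = 0 := by
      have e2' : (2:ℂ)⁻¹ • (T (1 + ((t : ℝ) : ℂ) • x) * v t + v t * T (1 + ((t : ℝ) : ℂ) • x)
          + ((1 + ((t : ℝ) : ℂ) • x) * star (T (star (v t)))
            + star (T (star (v t))) * (1 + ((t : ℝ) : ℂ) • x))) = 0 := by
        rw [smul_add]
        exact e2.symm
      exact smul_cancel (inv_ne_zero two_ne_zero) e2'
    constructor
    · -- Jordan part : g t = 0
      rw [hTa, hTv] at F1
      have := alg1 x (v t) (T x) (T (q t)) ((t : ℝ) : ℂ) hvein F1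
      have hg : (((t : ℝ) : ℂ) ^ 2) • g t = 0 := by
        rw [hgdef]
        exact this
      exact smul_cancel (pow_ne_zero 2 hc0) hg
    · -- star part : h t = 0
      have hsv : star (v t) = 1 - ((t : ℝ) : ℂ) • star x + (((t : ℝ) : ℂ) ^ 2) • star (q t) := by
        rw [hv2]
        simp only [star_add, star_sub, star_one, star_smul, Complex.star_def,
          Complex.conj_ofReal, map_pow]
      have hTsv : star (T (star (v t))) = -(((t : ℝ) : ℂ) • star (T (star x)))
          + (((t : ℝ) : ℂ) ^ 2) • star (T (star (q t))) := by
        rw [hsv, map_add, map_sub, map_smul, map_smul, h1]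
        rw [star_add, star_sub, star_zero, star_smul, star_smul, Complex.star_def,
          Complex.conj_ofReal, map_pow, Complex.conj_ofReal]
        abel
      have hD : star (T (star (v t))) - T (v t)
          = ((t : ℝ) : ℂ) • E + (((t : ℝ) : ℂ) ^ 2) • R t := by
        rw [hTsv, hTv, hEdef, hRdef]
        simp only [smul_sub]
        abel
      have FD : (1 + ((t : ℝ) : ℂ) • x) * (((t : ℝ) : ℂ) • E + (((t : ℝ) : ℂ) ^ 2) • R t)
          + (((t : ℝ) : ℂ) • E + (((t : ℝ) : ℂ) ^ 2) • R t) * (1 + ((t : ℝ) : ℂ) • x) = 0 := by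
        rw [← hD]
        calc (1 + ((t : ℝ) : ℂ) • x) * (star (T (star (v t))) - T (v t))
            + (star (T (star (v t))) - T (v t)) * (1 + ((t : ℝ) : ℂ) • x)
            = (T (1 + ((t : ℝ) : ℂ) • x) * v t + v t * T (1 + ((t : ℝ) : ℂ) • x)
              + ((1 + ((t : ℝ) : ℂ) • x) * star (T (star (v t)))
                + star (T (star (v t))) * (1 + ((t : ℝ) : ℂ) • x)))
            - (T (1 + ((t : ℝ) : ℂ) • x) * v t + v t * T (1 + ((t : ℝ) : ℂ) • x)
              + ((1 + ((t : ℝ) : ℂ) • x) * T (v t) + T (v t) * (1 + ((t : ℝ) : ℂ) • x))) := by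
              rw [mul_sub, sub_mul]; abel
        _ = 0 := by rw [F1, F2, sub_zero]
      have := alg2 x E (R t) ((t : ℝ) : ℂ) FD
      have hh : ((t : ℝ) : ℂ) • h t = 0 := by
        rw [hhdef]
        exact this
      exact smul_cancel hc0 hh
  -- pass to the limit
  have hg0 : g 0 = 0 := limzero g hgc (hev.mono fun t ht => ht.1)
  have hh0 : h 0 = 0 := limzero h hhc (hev.mono fun t ht => ht.2)
  constructor
  · -- star property
    rw [hhdef] at hh0
    simp only [Complex.ofReal_zero, zero_smul, smul_zero, add_zero, zero_add,
      ne_eq, OfNat.ofNat_ne_zero, not_false_eq_true, zero_pow] at hh0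
    have hE : E = 0 := smul_cancel two_ne_zero hh0
    rw [hEdef] at hE
    exact sub_eq_zero.mp hE
  · -- Jordan property
    rw [hgdef] at hg0
    simp only [Complex.ofReal_zero, zero_smul, add_zero] at hg0
    rw [hqdef] at hg0
    simp only [hv0, mul_one] at hg0
    -- hg0 : 2 • T (x*x) - T x * x - x * T x - x * T x - T x * x = 0
    apply two_smul_cancel (A := A)
    have h9 : (2:ℂ) • T (x * x) - (2:ℂ) • (T x * x + x * T x) = 0 := by
      calc (2:ℂ) • T (x * x) - (2:ℂ) • (T x * x + x * T x)
          = (2:ℂ) • T (x * x) - T x * x - x * T x - x * T x - T x * x := by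
            rw [two_smul]; module
      _ = 0 := hg0
    exact sub_eq_zero.mp h9

end Main

/-- A continuous linear map `T` on a unital C*-algebra which is a triple derivation at the unit
and satisfies `T(1) = 0` is a `*`-derivation and a triple derivation. -/
theorem stmt3 {A : Type*} [CStarAlgebra A] (T : A →ₗ[ℂ] A) (hcont : Continuous T)
    (hT : ∀ a b c : A, trip a b c = 1 →
      T 1 = trip (T a) b c + trip a (T b) c + trip a b (T c))
    (h1 : T 1 = 0) :
    (∀ x y : A, T (x * y) = T x * y + x * T y) ∧
    (∀ x : A, T (star x) = star (T x)) ∧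
    (∀ a b c : A, T (trip a b c) = trip (T a) b c + trip a (T b) c + trip a b (T c)) := by
  have hstar : ∀ x : A, T (star x) = star (T x) := by
    intro x
    have h := (star_and_jordan T hcont hT h1 (star x)).1
    rwa [star_star] at h
  have hJ : ∀ x : A, T (x * x) = T x * x + x * T x :=
    fun x => (star_and_jordan T hcont hT h1 x).2
  have hder : ∀ x y : A, T (x * y) = T x * y + x * T y := bresar T hJ
  refine ⟨hder, hstar, ?_⟩
  intro a b c
  have e1 : T (a * star b * c) = T a * star b * c + a * star (T b) * c + a * star b * T c := by
    rw [hder (a * star b) c, hder a (star b), hstar b]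
    noncomm_ring
  have e2 : T (c * star b * a) = T c * star b * a + c * star (T b) * a + c * star b * T a := by
    rw [hder (c * star b) a, hder c (star b), hstar b]
    noncomm_ring
  rw [trip, trip, trip, trip, map_smul, map_add, e1, e2, ← smul_add, ← smul_add]
  congr 1
  abel
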